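/- (Kronecker) A monic integer polynomial f with f(0) ≠ 0 has Mahler measure 1 if and only if every root of f is a root of unity. -/

import Mathlib

open Polynomial
open IntermediateField

/-- Mahler measure of a complex polynomial. -/
noncomputable def mahlerMeasure (f : Polynomial ℂ) : ℝ :=
  ‖f.leadingCoeff‖ * (f.roots.map (fun α => max ‖α‖ 1)).prod


private lemma mprod_le_one (s : Multiset ℝ) (h : ∀ x ∈ s, 0 ≤ x ∧ x ≤ 1) : s.prod ≤ 1 := by
  induction s using Multiset.induction with
  | empty => simp
  | cons a t ih =>
    rw [Multiset.prod_cons]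
    have ha := h a (Multiset.mem_cons_self a t)
    have ht : t.prod ≤ 1 := ih (fun x hx => h x (Multiset.mem_cons_of_mem hx))
    have ht0 : 0 ≤ t.prod := Multiset.prod_nonneg (fun x hx => (h x (Multiset.mem_cons_of_mem hx)).1)
    nlinarith [ha.1, ha.2]

private lemma msingle_le_prod (s : Multiset ℝ) (h : ∀ x ∈ s, 1 ≤ x) :
    ∀ x ∈ s, x ≤ s.prod := by
  induction s using Multiset.induction with
  | empty => simp
  | cons a t ih =>
    intro x hx
    rw [Multiset.prod_cons]
    have ht1 : (1:ℝ) ≤ t.prod := Multiset.one_le_prod (fun y hy => h y (Multiset.mem_cons_of_mem hy))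
    rcases Multiset.mem_cons.mp hx with rfl | hx
    · nlinarith [h x (Multiset.mem_cons_self x t)]
    · have hx' := ih (fun y hy => h y (Multiset.mem_cons_of_mem hy)) x hx
      have ha := h a (Multiset.mem_cons_self a t)
      have hx1 := h x (Multiset.mem_cons_of_mem hx)
      nlinarith


/-- Kronecker's theorem: a monic integer polynomial with nonzero constant term has
Mahler measure 1 iff all of its (complex) roots are roots of unity. -/
theorem kronecker (f : Polynomial ℤ) (hmonic : f.Monic) (h0 : f.eval 0 ≠ 0) :
    _root_.mahlerMeasure (f.map (Int.castRingHom ℂ)) = 1 ↔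
      ∀ α ∈ (f.map (Int.castRingHom ℂ)).roots, ∃ k : ℕ, 0 < k ∧ α ^ k = 1 := by
  set g := f.map (Int.castRingHom ℂ) with hg
  have hgmonic : g.Monic := hmonic.map _
  have hgne : g ≠ 0 := hgmonic.ne_zero
  have hlead : g.leadingCoeff = 1 := hgmonic
  constructor
  · intro hM
    rw [_root_.mahlerMeasure, hlead, norm_one, one_mul] at hM
    have hle : ∀ α ∈ g.roots, ‖α‖ ≤ 1 := by
      intro α hα
      have h1 : max ‖α‖ 1 ≤ (g.roots.map (fun α => max ‖α‖ 1)).prod := by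
        refine msingle_le_prod _ ?_ _ (Multiset.mem_map_of_mem _ hα)
        intro x hx
        simp only [Multiset.mem_map] at hx
        obtain ⟨b, _, rfl⟩ := hx
        exact le_max_right _ _
      rw [hM] at h1
      exact le_trans (le_max_left _ _) h1
    have hsplits : g.Splits := IsAlgClosed.splits g
    have hprod : g = (g.roots.map (fun a => X - C a)).prod :=
      hsplits.eq_prod_roots_of_monic hgmonic
    have heval0 : ‖g.eval 0‖ = (g.roots.map (fun a => ‖a‖)).prod := by
      conv_lhs => rw [hprod]
      rw [eval_multiset_prod, Multiset.map_map, show ∀ m : Multiset ℂ, ‖m.prod‖ = (m.map (fun a => ‖a‖)).prod from fun m => map_multiset_prod (normHom : ℂ →*₀ ℝ) m, Multiset.map_map]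
      congr 1
      refine Multiset.map_congr rfl ?_
      intro a _
      simp [Function.comp]
    have h0' : (1 : ℝ) ≤ ‖g.eval 0‖ := by
      have hge : g.eval 0 = ((f.eval 0 : ℤ) : ℂ) := by
        rw [hg, eval_map, eval₂_at_zero, eq_intCast, ← coeff_zero_eq_eval_zero]
      rw [hge, Complex.norm_intCast]
      exact_mod_cast Int.one_le_abs h0
    have habs : ∀ α ∈ g.roots, ‖α‖ = 1 := by
      intro α hα
      refine le_antisymm (hle α hα) ?_
      by_contra hc
      push_neg at hc
      obtain ⟨s, hs⟩ := Multiset.exists_cons_of_mem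
        (Multiset.mem_map_of_mem (fun a => ‖a‖) hα)
      have hrest : s.prod ≤ 1 := by
        refine mprod_le_one _ ?_
        intro x hx
        have hx' : x ∈ g.roots.map (fun a => ‖a‖) := by
          rw [hs]; exact Multiset.mem_cons_of_mem hx
        simp only [Multiset.mem_map] at hx'
        obtain ⟨b, hb, rfl⟩ := hx'
        exact ⟨norm_nonneg b, hle b hb⟩
      have hfin : (g.roots.map (fun a => ‖a‖)).prod ≤ ‖α‖ := by
        rw [hs, Multiset.prod_cons]
        calc ‖α‖ * s.prod ≤ ‖α‖ * 1 :=
              mul_le_mul_of_nonneg_left hrest (norm_nonneg α)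
          _ = ‖α‖ := mul_one _
      rw [← heval0] at hfin
      linarith
    intro α hα
    have hαroot : g.eval α = 0 := isRoot_of_mem_roots hα
    have haα : (aeval α f : ℂ) = 0 := by
      rw [aeval_def, ← eval_map, algebraMap_int_eq, ← hg]; exact hαroot
    have hint : IsIntegral ℤ α := ⟨f, hmonic, by rwa [← aeval_def]⟩
    have halg : IsIntegral ℚ α := hint.tower_top
    letI : FiniteDimensional ℚ ℚ⟮α⟯ := IntermediateField.adjoin.finiteDimensional halg
    haveI : NumberField ℚ⟮α⟯ := ⟨⟩
    set x : ℚ⟮α⟯ := IntermediateField.AdjoinSimple.gen ℚ α with hx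
    have hxα : (algebraMap ℚ⟮α⟯ ℂ) x = α := rfl
    have hax : (aeval x f : ℚ⟮α⟯) = 0 := by
      apply (algebraMap ℚ⟮α⟯ ℂ).injective
      rw [map_zero, ← aeval_algebraMap_apply, hxα, haα]
    have hxint : IsIntegral ℤ x := ⟨f, hmonic, by rwa [← aeval_def]⟩
    have hnorm : ∀ φ : ℚ⟮α⟯ →+* ℂ, ‖φ x‖ = 1 := by
      intro φ
      have hroot : (φ x) ∈ g.roots := by
        rw [mem_roots hgne]
        have hgeq : g = (f.map (Int.castRingHom ℚ⟮α⟯)).map φ := by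
          rw [hg, Polynomial.map_map]
          congr 1
          exact RingHom.ext_int _ _
        have hx0 : (f.map (Int.castRingHom ℚ⟮α⟯)).eval x = 0 := by
          rwa [eval_map, ← algebraMap_int_eq, ← aeval_def]
        show ((f.map (Int.castRingHom ℂ)).eval (φ x)) = 0
        rw [show f.map (Int.castRingHom ℂ) = g from rfl, hgeq, eval_map, eval₂_hom, hx0, map_zero]
      simpa using habs _ hroot
    obtain ⟨n, hn, hxn⟩ := NumberField.Embeddings.pow_eq_one_of_norm_eq_one ℚ⟮α⟯ ℂ hxint hnorm
    exact ⟨n, hn, by rw [← hxα, ← map_pow, hxn, map_one]⟩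
  · intro h
    rw [_root_.mahlerMeasure, hlead, norm_one, one_mul]
    rw [Multiset.prod_eq_one]
    intro y hy
    simp only [Multiset.mem_map] at hy
    obtain ⟨α, hα, rfl⟩ := hy
    obtain ⟨k, hk, hαk⟩ := h α hα
    have h1 : ‖α‖ ^ k = 1 := by
      rw [← norm_pow, hαk, norm_one]
    have h2 : ‖α‖ = 1 := by
      rcases lt_trichotomy ‖α‖ 1 with hlt | heq | hgt
      · have := pow_lt_one₀ (norm_nonneg α) hlt hk.ne'
        linarith
      · exact heq
      · have := one_lt_pow₀ hgt hk.ne'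
        linarith
    rw [h2]; simp
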